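/- arXiv:1604.01542 — 6 statements merged into one kernel-verified Lean document; each statement's English description precedes it below -/
import Mathlib

section
/- Let E be a finite-dimensional real normed vector space, let N ≥ 2, and let G_1, …, G_N be nonempty closed subsets of E. Define r(x) = max_{1 ≤ k ≤ N} d(x, G_k), where d(x, S) = inf_{y ∈ S} ‖x − y‖. Suppose x* ∈ E is a global minimizer of r over E. Then the maximum is attained by at least two indices at x*: there exist j ≠ k with d(x*, G_j) = r(x*) and d(x*, G_k) = r(x*). -/
/-- In a finite-dimensional real normed space, if `x*` globally minimizes
`x ↦ max_{1 ≤ k ≤ N} d(x, G k)` for `N ≥ 2` nonempty closed sets `G k`, then at least two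
indices attain the maximum at `x*`. -/
theorem stmt1 {E : Type*} [NormedAddCommGroup E] [NormedSpace ℝ E] [FiniteDimensional ℝ E]
    {N : ℕ} (hN : 2 ≤ N) (G : Fin N → Set E)
    (hne : ∀ k, (G k).Nonempty) (hcl : ∀ k, IsClosed (G k))
    (xs : E) (hopt : ∀ x : E, (⨆ k, Metric.infDist xs (G k)) ≤ ⨆ k, Metric.infDist x (G k)) :
    ∃ j k : Fin N, j ≠ k ∧
      Metric.infDist xs (G j) = (⨆ i, Metric.infDist xs (G i)) ∧
      Metric.infDist xs (G k) = (⨆ i, Metric.infDist xs (G i)) := by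
  have hNpos : 0 < N := by omega
  haveI : Nonempty (Fin N) := ⟨⟨0, hNpos⟩⟩
  haveI : Nontrivial (Fin N) := Fin.nontrivial_iff_two_le.mpr hN
  set r : ℝ := ⨆ i, Metric.infDist xs (G i) with hr
  have hbdd : BddAbove (Set.range fun i => Metric.infDist xs (G i)) :=
    Set.Finite.bddAbove (Set.finite_range _)
  have hle : ∀ i, Metric.infDist xs (G i) ≤ r := fun i => le_ciSup hbdd i
  obtain ⟨j, hj⟩ : ∃ j, Metric.infDist xs (G j) = r := exists_eq_ciSup_of_finite
  by_cases hzero : r = 0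
  · -- all distances are 0 = r; take indices 0 and 1
    refine ⟨⟨0, by omega⟩, ⟨1, by omega⟩, by simp [Fin.ext_iff], ?_, ?_⟩ <;>
    · exact le_antisymm (hle _) (hzero ▸ Metric.infDist_nonneg)
  · have hrpos : 0 < r := lt_of_le_of_ne (hj ▸ Metric.infDist_nonneg) (Ne.symm hzero)
    by_contra hcon
    push_neg at hcon
    have hlt : ∀ k, k ≠ j → Metric.infDist xs (G k) < r := by
      intro k hk
      rcases lt_or_eq_of_le (hle k) with h | h
      · exact h
      · exact absurd (hcon j k (Ne.symm hk) hj) (fun hne' => hne' h)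
    set s : Finset (Fin N) := Finset.univ.erase j with hs
    obtain ⟨i0, hi0⟩ := exists_ne j
    have hsne : s.Nonempty := ⟨i0, Finset.mem_erase.mpr ⟨hi0, Finset.mem_univ i0⟩⟩
    set m : ℝ := s.sup' hsne (fun i => Metric.infDist xs (G i)) with hm
    have hmlt : m < r := by
      apply Finset.sup'_lt_iff hsne |>.mpr
      intro i hi
      exact hlt i (Finset.mem_erase.mp hi).1
    have hm0 : 0 ≤ m :=
      le_trans Metric.infDist_nonneg
        (Finset.le_sup' (fun i => Metric.infDist xs (G i))
          (Finset.mem_erase.mpr ⟨hi0, Finset.mem_univ i0⟩))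
    obtain ⟨y, hy, hdy⟩ := (hcl j).exists_infDist_eq_dist (hne j) xs
    set t : ℝ := (r - m) / (2 * r) with ht
    have htpos : 0 < t := div_pos (by linarith) (by linarith)
    have htle : t ≤ 1 := by
      rw [ht, div_le_one (by linarith)]; linarith
    set x' : E := xs + t • (y - xs) with hx'
    have hdist : dist x' xs = t * r := by
      rw [hx', dist_eq_norm]
      simp only [add_sub_cancel_left, norm_smul, Real.norm_eq_abs, abs_of_pos htpos]
      rw [← hj, hdy, dist_eq_norm, norm_sub_rev]
    have hdisty : dist x' y = (1 - t) * r := by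
      rw [hx', dist_eq_norm]
      have heq : xs + t • (y - xs) - y = (1 - t) • (xs - y) := by module
      rw [heq, norm_smul, Real.norm_eq_abs, abs_of_nonneg (by linarith)]
      rw [← hj, hdy, dist_eq_norm]
    have hhalf : (1 - t) * r = (r + m) / 2 := by
      rw [ht]; field_simp; ring
    have hkey : ∀ i, Metric.infDist x' (G i) ≤ (r + m) / 2 := by
      intro i
      by_cases hij : i = j
      · subst hij
        calc Metric.infDist x' (G i) ≤ dist x' y := Metric.infDist_le_dist_of_mem hy
          _ = (r + m) / 2 := by rw [hdisty, hhalf]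
      · calc Metric.infDist x' (G i)
            ≤ Metric.infDist xs (G i) + dist x' xs :=
              Metric.infDist_le_infDist_add_dist
          _ ≤ m + t * r := by
              have h1 : Metric.infDist xs (G i) ≤ m :=
                Finset.le_sup' (fun i => Metric.infDist xs (G i))
                  (Finset.mem_erase.mpr ⟨hij, Finset.mem_univ i⟩)
              have h2 := hdist
              linarith
          _ = (r + m) / 2 := by rw [ht]; field_simp; ring
    have hsup : (⨆ i, Metric.infDist x' (G i)) ≤ (r + m) / 2 := ciSup_le hkey
    have hfin := hopt x'
    linarith
end

section
/- Consider an uncertain optimization problem given by a scenario space Ξ, a set X ⊆ M where (M, d) is a metric space, an objective f : M → Ξ → ℝ, and constraints F : M → Ξ → ℝ^m. For U ⊆ Ξ, a pair (x, y) with x ∈ X and y : Ξ → M is feasible for Rec(U) if for every ξ ∈ U one has y(ξ) ∈ X and F(y(ξ), ξ) ≤ 0 componentwise; its objectives are fObj_U(y) = sup_{ξ ∈ U} f(y(ξ), ξ) and rObj_U(x, y) = sup_{ξ ∈ U} d(x, y(ξ)), suprema taken in the extended reals. A feasible pair (x, y) is Pareto efficient for Rec(U) if there is no feasible pair (x', y')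 with fObj_U(y') ≤ fObj_U(y) and rObj_U(x', y') ≤ rObj_U(x, y) and at least one inequality strict; x is recoverable-robust with respect to U if there exists y such that (x, y) is Pareto efficient for Rec(U). Let U' ⊆ U. Assume: for every pair (x, y') feasible for Rec(U') there exists y : Ξ → M such that (x, y) is feasible for Rec(U), fObj_U(y) = fObj_{U'}(y'), and rObj_U(x, y) = rObj_{U'}(x, y'). Then a point x ∈ X is recoverable-robust with respect to U if and only if it is recoverable-robust with respect to U'. -/
/-! **Statement 4.** Reduction lemma for the biobjective recoverable-robust counterpart:
if `U' ⊆ U` and every pair feasible for `Rec(U')` can be extended to a pair feasible for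
`Rec(U)` with the same objective values, then `Rec(U)` and `Rec(U')` have the same
recoverable-robust solutions. -/

section

variable {M Ξ : Type*} [MetricSpace M] {m : ℕ}

/-- `(x, y)` is feasible for `Rec(U)`: `x ∈ X`, and for every scenario `ξ ∈ U` the recovery
solution `y ξ` lies in `X` and satisfies all constraints `F i (y ξ) ξ ≤ 0`. -/
def RecFeasible (X : Set M) (F : M → Ξ → Fin m → ℝ) (U : Set Ξ) (x : M) (y : Ξ → M) : Prop :=
  x ∈ X ∧ ∀ ξ ∈ U, y ξ ∈ X ∧ ∀ i, F (y ξ) ξ i ≤ 0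

/-- Worst-case objective value `fObj_U(y) = sup_{ξ ∈ U} f (y ξ) ξ`, in the extended reals. -/
noncomputable def fObj (f : M → Ξ → ℝ) (U : Set Ξ) (y : Ξ → M) : EReal :=
  ⨆ ξ ∈ U, (f (y ξ) ξ : EReal)

/-- Worst-case recovery cost `rObj_U(x, y) = sup_{ξ ∈ U} d(x, y ξ)`, in the extended reals. -/
noncomputable def rObj (U : Set Ξ) (x : M) (y : Ξ → M) : EReal :=
  ⨆ ξ ∈ U, (dist x (y ξ) : EReal)

/-- `(x, y)` is Pareto efficient for `Rec(U)`: it is feasible, and no feasible pair weakly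
improves both objectives with at least one strict improvement. -/
def ParetoEfficient (X : Set M) (f : M → Ξ → ℝ) (F : M → Ξ → Fin m → ℝ) (U : Set Ξ)
    (x : M) (y : Ξ → M) : Prop :=
  RecFeasible X F U x y ∧
    ¬ ∃ x' y', RecFeasible X F U x' y' ∧
      fObj f U y' ≤ fObj f U y ∧ rObj U x' y' ≤ rObj U x y ∧
      (fObj f U y' < fObj f U y ∨ rObj U x' y' < rObj U x y)

/-- `x` is recoverable-robust with respect to `U` if some `y` makes `(x, y)` Pareto
efficient for `Rec(U)`. -/
def RecoverableRobust (X : Set M) (f : M → Ξ → ℝ) (F : M → Ξ → Fin m → ℝ) (U : Set Ξ)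
    (x : M) : Prop :=
  ∃ y : Ξ → M, ParetoEfficient X f F U x y

theorem stmt4 (X : Set M) (f : M → Ξ → ℝ) (F : M → Ξ → Fin m → ℝ)
    (U U' : Set Ξ) (hsub : U' ⊆ U)
    (hext : ∀ x y', RecFeasible X F U' x y' →
      ∃ y : Ξ → M, RecFeasible X F U x y ∧
        fObj f U y = fObj f U' y' ∧ rObj U x y = rObj U' x y') :
    ∀ x ∈ X, (RecoverableRobust X f F U x ↔ RecoverableRobust X f F U' x) := by
  have fmono : ∀ y : Ξ → M, fObj f U' y ≤ fObj f U y := fun y =>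
    biSup_mono (fun ξ h => hsub h)
  have rmono : ∀ (x : M) (y : Ξ → M), rObj U' x y ≤ rObj U x y := fun x y =>
    biSup_mono (fun ξ h => hsub h)
  have feassub : ∀ x y, RecFeasible X F U x y → RecFeasible X F U' x y := fun x y h =>
    ⟨h.1, fun ξ hξ => h.2 ξ (hsub hξ)⟩
  intro x hx
  constructor
  · rintro ⟨y, hfeas, hnd⟩
    refine ⟨y, feassub x y hfeas, ?_⟩
    rintro ⟨x', y', hfeas', hf, hr, hstrict⟩
    obtain ⟨yy, hfeasU, hfeq, hreq⟩ := hext x' y' hfeas'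
    exact hnd ⟨x', yy, hfeasU, hfeq ▸ hf.trans (fmono y),
      hreq ▸ hr.trans (rmono x y), by
        rcases hstrict with h | h
        · exact Or.inl (hfeq ▸ h.trans_le (fmono y))
        · exact Or.inr (hreq ▸ h.trans_le (rmono x y))⟩
  · rintro ⟨y', hfeas', hnd⟩
    obtain ⟨y, hfeasU, hfeq, hreq⟩ := hext x y' hfeas'
    refine ⟨y, hfeasU, ?_⟩
    rintro ⟨x₂, y₂, hfeas₂, hf, hr, hstrict⟩
    exact hnd ⟨x₂, y₂, feassub x₂ y₂ hfeas₂, (fmono y₂).trans (hf.trans hfeq.le),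
      (rmono x₂ y₂).trans (hr.trans hreq.le), by
        rcases hstrict with h | h
        · exact Or.inl ((fmono y₂).trans_lt (h.trans_eq hfeq))
        · exact Or.inr ((rmono x₂ y₂).trans_lt (h.trans_eq hreq))⟩

end
end

section
/- Consider an uncertain optimization problem with feasible ground set X contained in a metric space (M, d), objective f : M → Ξ → ℝ, constraints F : M → Ξ → ℝ^m, and uncertainty set U ⊆ Ξ. Let SR(U) = {x ∈ X : F(x, ξ) ≤ 0 componentwise for all ξ ∈ U} be the set of strictly robust solutions. Suppose x̄ is an optimal solution of the strictly robust counterpart RC(U), i.e. x̄ ∈ SR(U) and sup_{ξ ∈ U} f(x̄, ξ) ≤ sup_{ξ ∈ U} f(x, ξ) for all x ∈ SR(U). Define ȳ : Ξ → M by ȳ(ξ) = x̄ for all ξ. Then (x̄, ȳ) is a lexicographically minimal feasible solution of Rec(U) with respect to the order (rObj, fObj): (x̄, ȳ) is feasible for Rec(U), and for every feasible pair (x, y) of Rec(U), either rObj_U(x, y) > rObj_U(x̄, ȳ), or rObj_U(x, y) = rObj_U(x̄, ȳ) and fObj_U(y) ≥ fObj_U(ȳ). -/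
/-! **Statement 8.** If `x̄` optimally solves the strictly robust counterpart `RC(U)`, then the
pair `(x̄, ȳ)` with `ȳ(ξ) = x̄` for all `ξ` is a lexicographically minimal feasible solution of
`Rec(U)` with respect to the order `(rObj, fObj)`. -/

section

variable {M Ξ : Type*} [MetricSpace M] {m : ℕ}

/-- The set of strictly robust solutions `SR(U)`. -/
def StrictlyRobust (X : Set M) (F : M → Ξ → Fin m → ℝ) (U : Set Ξ) : Set M :=
  {x ∈ X | ∀ ξ ∈ U, ∀ i, F x ξ i ≤ 0}

theorem stmt8 (X : Set M) (f : M → Ξ → ℝ) (F : M → Ξ → Fin m → ℝ) (U : Set Ξ)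
    (xbar : M) (hfeas : xbar ∈ StrictlyRobust X F U)
    (hopt : ∀ x ∈ StrictlyRobust X F U,
      (⨆ ξ ∈ U, (f xbar ξ : EReal)) ≤ ⨆ ξ ∈ U, (f x ξ : EReal))
    (ybar : Ξ → M) (hybar : ∀ ξ, ybar ξ = xbar) :
    RecFeasible X F U xbar ybar ∧
      ∀ x y, RecFeasible X F U x y →
        rObj U xbar ybar < rObj U x y ∨
          (rObj U x y = rObj U xbar ybar ∧ fObj f U ybar ≤ fObj f U y) := by
  obtain ⟨hX, hF⟩ := hfeas
  constructor
  · exact ⟨hX, fun ξ hξ => by rw [hybar]; exact ⟨hX, hF ξ hξ⟩⟩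
  · intro x y hxy
    have hle : rObj U xbar ybar ≤ rObj U x y := by
      apply iSup₂_le
      intro ξ hξ
      rw [hybar, dist_self]
      exact le_trans (by exact_mod_cast dist_nonneg) (le_iSup₂ (f := fun ξ _ => ((dist x (y ξ) : ℝ) : EReal)) ξ hξ)
    rcases lt_or_eq_of_le hle with h | h
    · exact Or.inl h
    · refine Or.inr ⟨h.symm, ?_⟩
      rcases Set.eq_empty_or_nonempty U with hU | ⟨ξ0, hξ0⟩
      · simp [fObj, hU]
      · have heq : ∀ ξ ∈ U, y ξ = x := by
          intro ξ hξ
          have h1 : ((dist x (y ξ) : ℝ) : EReal) ≤ rObj U xbar ybar := by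
            rw [h]
            exact le_iSup₂ (f := fun ξ _ => ((dist x (y ξ) : ℝ) : EReal)) ξ hξ
          have h2 : rObj U xbar ybar ≤ 0 := by
            apply iSup₂_le
            intro ξ hξ
            rw [hybar, dist_self]; norm_num
          have : (dist x (y ξ) : ℝ) ≤ 0 := by exact_mod_cast h1.trans h2
          exact (dist_eq_zero.mp (le_antisymm this dist_nonneg)).symm
        have hxSR : x ∈ StrictlyRobust X F U := by
          refine ⟨hxy.1, fun ξ hξ i => ?_⟩
          have := (hxy.2 ξ hξ).2 i
          rwa [heq ξ hξ] at this
        have h1 : fObj f U ybar = ⨆ ξ ∈ U, (f xbar ξ : EReal) := by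
          unfold fObj; exact biSup_congr fun ξ hξ => by rw [hybar]
        have h2 : fObj f U y = ⨆ ξ ∈ U, (f x ξ : EReal) := by
          unfold fObj; exact biSup_congr fun ξ hξ => by rw [heq ξ hξ]
        rw [h1, h2]
        exact hopt x hxSR


end
end

section
/- Consider an uncertain optimization problem with feasible ground set X contained in a metric space (M, d), objective f : M → Ξ → ℝ, constraints F : M → Ξ → ℝ^m, and uncertainty set U ⊆ Ξ, U nonempty. Let (x̄, ȳ) be a lexicographically minimal feasible solution of Rec(U) with respect to the order (rObj, fObj). Then: (i) the set of strictly robust solutions SR(U) = {x ∈ X : F(x, ξ) ≤ 0 componentwise for all ξ ∈ U} is nonempty if and only if rObj_U(x̄, ȳ) = 0; and (ii) if rObj_U(x̄, ȳ) = 0, then x̄ ∈ SR(U) and x̄ is an optimal solution of the strictly robust counterpart RC(U), i.e. sup_{ξ ∈ U} f(x̄, ξ) ≤ sup_{ξ ∈ U} f(x, ξ) for all x ∈ SR(U). -/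
/-! **Statement 9.** Let `(x̄, ȳ)` be a lexicographically minimal feasible solution of `Rec(U)`
with respect to `(rObj, fObj)`, with `U` nonempty. Then `SR(U) ≠ ∅` iff `rObj(x̄, ȳ) = 0`, and
in that case `x̄ ∈ SR(U)` and `x̄` is optimal for the strictly robust counterpart `RC(U)`. -/

section

variable {M Ξ : Type*} [MetricSpace M] {m : ℕ}

theorem stmt9 (X : Set M) (f : M → Ξ → ℝ) (F : M → Ξ → Fin m → ℝ) (U : Set Ξ)
    (hU : U.Nonempty)
    (xbar : M) (ybar : Ξ → M)
    (hfeas : RecFeasible X F U xbar ybar)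
    (hlex : ∀ x y, RecFeasible X F U x y →
      rObj U xbar ybar < rObj U x y ∨
        (rObj U x y = rObj U xbar ybar ∧ fObj f U ybar ≤ fObj f U y)) :
    ((StrictlyRobust X F U).Nonempty ↔ rObj U xbar ybar = 0) ∧
      (rObj U xbar ybar = 0 →
        xbar ∈ StrictlyRobust X F U ∧
          ∀ x ∈ StrictlyRobust X F U,
            (⨆ ξ ∈ U, (f xbar ξ : EReal)) ≤ ⨆ ξ ∈ U, (f x ξ : EReal)) := by
  obtain ⟨ξ0, hξ0⟩ := hU
  -- rObj of a constant strategy is 0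
  have hconst : ∀ x : M, rObj U x (fun _ => x) = 0 := by
    intro x
    apply le_antisymm
    · refine iSup₂_le fun ξ hξ => ?_
      simp
    · calc (0 : EReal) = ((dist x x : ℝ) : EReal) := by simp
        _ ≤ _ := le_iSup₂ (f := fun ξ _ => ((dist x x : ℝ) : EReal)) ξ0 hξ0
  -- rObj xbar ybar = 0 implies ybar ξ = xbar on U
  have heq : rObj U xbar ybar = 0 → ∀ ξ ∈ U, ybar ξ = xbar := by
    intro h0 ξ hξ
    have hle : ((dist xbar (ybar ξ) : ℝ) : EReal) ≤ rObj U xbar ybar :=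
      le_iSup₂ (f := fun ξ _ => ((dist xbar (ybar ξ) : ℝ) : EReal)) ξ hξ
    rw [h0] at hle
    have : dist xbar (ybar ξ) ≤ 0 := by exact_mod_cast hle
    have : dist xbar (ybar ξ) = 0 := le_antisymm this dist_nonneg
    exact (dist_eq_zero.mp this).symm
  constructor
  · constructor
    · rintro ⟨x, hxX, hxF⟩
      have hfx : RecFeasible X F U x (fun _ => x) :=
        ⟨hxX, fun ξ hξ => ⟨hxX, hxF ξ hξ⟩⟩
      rcases hlex x (fun _ => x) hfx with h | h
      · rw [hconst] at h
        have hnn : (0 : EReal) ≤ rObj U xbar ybar := by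
          have h1 : (0 : EReal) ≤ ((dist xbar (ybar ξ0) : ℝ) : EReal) := by
            exact_mod_cast dist_nonneg
          exact h1.trans (le_iSup₂ (f := fun ξ _ => ((dist xbar (ybar ξ) : ℝ) : EReal)) ξ0 hξ0)
        exact absurd h (not_lt.mpr hnn)
      · rw [hconst] at h
        exact h.1.symm
    · intro h0
      have := heq h0
      refine ⟨xbar, hfeas.1, fun ξ hξ i => ?_⟩
      have := hfeas.2 ξ hξ
      rw [(heq h0) ξ hξ] at this
      exact this.2 i
  · intro h0
    have hy : ∀ ξ ∈ U, ybar ξ = xbar := heq h0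
    have hxbarSR : xbar ∈ StrictlyRobust X F U := by
      refine ⟨hfeas.1, fun ξ hξ i => ?_⟩
      have := hfeas.2 ξ hξ
      rw [hy ξ hξ] at this
      exact this.2 i
    refine ⟨hxbarSR, fun x hx => ?_⟩
    have hfx : RecFeasible X F U x (fun _ => x) :=
      ⟨hx.1, fun ξ hξ => ⟨hx.1, hx.2 ξ hξ⟩⟩
    have hfobj : (⨆ ξ ∈ U, (f xbar ξ : EReal)) = fObj f U ybar := by
      unfold fObj
      exact (biSup_congr fun ξ hξ => by rw [hy ξ hξ]).symm
    rcases hlex x (fun _ => x) hfx with h | h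
    · rw [hconst, h0] at h
      exact absurd h (lt_irrefl 0)
    · rw [hfobj]
      exact h.2

end
end

section
/- Let F₋ = {(x₁, x₂) ∈ ℝ² : x₁x₂ ≤ −1, x₁ ≤ 0, x₂ ≥ 0} and F₊ = {(x₁, x₂) ∈ ℝ² : x₁x₂ ≥ 1, x₁ ≥ 0, x₂ ≥ 0}, and let ‖·‖ denote the Euclidean norm on ℝ². Then for every x ∈ ℝ² and every y₋ ∈ F₋, y₊ ∈ F₊, there exist x' ∈ ℝ² and y'₋ ∈ F₋, y'₊ ∈ F₊ such that max(|(y'₋)₁|, |(y'₊)₁|) < max(|(y₋)₁|, |(y₊)₁|) and max(‖x' − y'₋‖, ‖x' − y'₊‖) < max(‖x − y₋‖, ‖x − y₊‖). In particular, the biobjective problem of minimizing (max(|(y₋)₁|, |(y₊)₁|), max(‖x − y₋‖, ‖x − y₊‖)) over x ∈ ℝ², y₋ ∈ F₋, y₊ ∈ F₊ has no (weakly) Pareto efficient solution. -/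
/-! **Statement 16.** For the two feasible sets
`F₋ = {x₁x₂ ≤ −1, x₁ ≤ 0, x₂ ≥ 0}` and `F₊ = {x₁x₂ ≥ 1, x₁ ≥ 0, x₂ ≥ 0}` in the Euclidean
plane, every solution `(x, y₋, y₊)` of the biobjective recoverable-robust problem can be
strictly improved in both objectives simultaneously; in particular no (weakly) Pareto
efficient solution exists. -/

/-- The feasible set of scenario `ξ = −1`. -/
def Fneg : Set (EuclideanSpace ℝ (Fin 2)) :=
  {p | p 0 * p 1 ≤ -1 ∧ p 0 ≤ 0 ∧ 0 ≤ p 1}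

/-- The feasible set of scenario `ξ = 1`. -/
def Fpos : Set (EuclideanSpace ℝ (Fin 2)) :=
  {p | 1 ≤ p 0 * p 1 ∧ 0 ≤ p 0 ∧ 0 ≤ p 1}

/-- Auxiliary constructor for points of the Euclidean plane. -/
noncomputable def vec (a b : ℝ) : EuclideanSpace ℝ (Fin 2) :=
  (WithLp.equiv 2 (Fin 2 → ℝ)).symm ![a, b]

lemma vec_apply0 (a b : ℝ) : vec a b 0 = a := rfl
lemma vec_apply1 (a b : ℝ) : vec a b 1 = b := rfl

lemma norm_vec (a b : ℝ) : ‖vec a b‖ = Real.sqrt (a ^ 2 + b ^ 2) := by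
  rw [EuclideanSpace.norm_eq]
  simp [Fin.sum_univ_two, vec_apply0, vec_apply1, sq_abs]

lemma vec_sub (a b c d : ℝ) : vec a b - vec c d = vec (a - c) (b - d) := by
  ext i
  fin_cases i <;> simp [vec]

lemma key (x ym yp : EuclideanSpace ℝ (Fin 2)) (hm : ym ∈ Fneg) (hp : yp ∈ Fpos) :
    ∃ (x' ym' yp' : EuclideanSpace ℝ (Fin 2)), ym' ∈ Fneg ∧ yp' ∈ Fpos ∧
      max |ym' 0| |yp' 0| < max |ym 0| |yp 0| ∧
      max ‖x' - ym'‖ ‖x' - yp'‖ < max ‖x - ym‖ ‖x - yp‖ := by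
  obtain ⟨hm1, hm2, hm3⟩ := hm
  obtain ⟨hp1, hp2, hp3⟩ := hp
  have hyp0 : 0 < yp 0 := by
    rcases lt_or_eq_of_le hp2 with h | h
    · exact h
    · exfalso; nlinarith
  have hA : 0 < max |ym 0| |yp 0| :=
    lt_of_lt_of_le (abs_pos.mpr hyp0.ne') (le_max_right _ _)
  have hne : ym ≠ yp := by
    intro h
    have : ym 0 = yp 0 := by rw [h]
    linarith
  have hB : 0 < max ‖x - ym‖ ‖x - yp‖ := by
    by_contra h
    push_neg at h
    have h1 : ‖x - ym‖ = 0 :=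
      le_antisymm (le_trans (le_max_left _ _) h) (norm_nonneg _)
    have h2 : ‖x - yp‖ = 0 :=
      le_antisymm (le_trans (le_max_right _ _) h) (norm_nonneg _)
    rw [norm_sub_eq_zero_iff] at h1 h2
    exact hne (h1 ▸ h2)
  set A := max |ym 0| |yp 0| with hAdef
  set B := max ‖x - ym‖ ‖x - yp‖ with hBdef
  set ε := min A B / 2 with hεdef
  have hε : 0 < ε := by positivity
  have hεA : ε < A := by
    have : min A B ≤ A := min_le_left _ _
    have : ε < min A B := by
      rw [hεdef]; linarith [lt_min hA hB]
    linarith [min_le_left A B]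
  have hεB : ε < B := by
    have : ε < min A B := by
      rw [hεdef]; linarith [lt_min hA hB]
    linarith [min_le_right A B]
  refine ⟨vec 0 (1/ε), vec (-ε) (1/ε), vec ε (1/ε), ?_, ?_, ?_, ?_⟩
  · refine ⟨?_, ?_, ?_⟩
    · rw [vec_apply0, vec_apply1]
      rw [show -ε * (1/ε) = -1 by field_simp]
    · rw [vec_apply0]; linarith
    · rw [vec_apply1]; positivity
  · refine ⟨?_, ?_, ?_⟩
    · rw [vec_apply0, vec_apply1]
      rw [show ε * (1/ε) = 1 by field_simp]
    · rw [vec_apply0]; linarith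
    · rw [vec_apply1]; positivity
  · rw [vec_apply0, vec_apply0, abs_neg, abs_of_pos hε, max_self]
    exact hεA
  · rw [vec_sub, vec_sub]
    have e1 : ‖vec (0 - -ε) (1/ε - 1/ε)‖ = ε := by
      rw [norm_vec]
      simp
      exact Real.sqrt_sq hε.le
    have e2 : ‖vec (0 - ε) (1/ε - 1/ε)‖ = ε := by
      rw [norm_vec]
      simp
      exact Real.sqrt_sq hε.le
    rw [e1, e2, max_self]
    exact hεB

theorem stmt16 :
    (∀ (x : EuclideanSpace ℝ (Fin 2)) (ym yp : EuclideanSpace ℝ (Fin 2)),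
      ym ∈ Fneg → yp ∈ Fpos →
        ∃ (x' ym' yp' : EuclideanSpace ℝ (Fin 2)), ym' ∈ Fneg ∧ yp' ∈ Fpos ∧
          max |ym' 0| |yp' 0| < max |ym 0| |yp 0| ∧
          max ‖x' - ym'‖ ‖x' - yp'‖ < max ‖x - ym‖ ‖x - yp‖) ∧
    ¬ ∃ (x : EuclideanSpace ℝ (Fin 2)) (ym yp : EuclideanSpace ℝ (Fin 2)),
        ym ∈ Fneg ∧ yp ∈ Fpos ∧
        ¬ ∃ (x' ym' yp' : EuclideanSpace ℝ (Fin 2)), ym' ∈ Fneg ∧ yp' ∈ Fpos ∧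
            max |ym' 0| |yp' 0| < max |ym 0| |yp 0| ∧
            max ‖x' - ym'‖ ‖x' - yp'‖ < max ‖x - ym‖ ‖x - yp‖ := by
  refine ⟨fun x ym yp hm hp => key x ym yp hm hp, ?_⟩
  rintro ⟨x, ym, yp, hm, hp, h⟩
  exact h (key x ym yp hm hp)
end

section
/- For each ξ₂ ∈ [1, ∞), let G₋(ξ₂) = [−1, −1 + 1/ξ₂] ⊆ ℝ and G₊(ξ₂) = [1 − 1/ξ₂, 1] ⊆ ℝ. Then the supremum over all these sets of the distance from the point 0 equals 1, i.e. sup { d(0, S) : S = G₋(ξ₂) or S = G₊(ξ₂) for some ξ₂ ∈ [1, ∞) } = 1, where d(0, S) = inf_{y ∈ S} |y|; but no set in this family attains the supremum: d(0, G₋(ξ₂)) = d(0, G₊(ξ₂)) = 1 − 1/ξ₂ < 1 for every ξ₂ ∈ [1, ∞). -/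
lemma stmt17_aux (ξ₂ : ℝ) (h : 1 ≤ ξ₂) :
    Metric.infDist (0 : ℝ) (Set.Icc (-1) (-1 + 1 / ξ₂)) = 1 - 1 / ξ₂ ∧
    Metric.infDist (0 : ℝ) (Set.Icc (1 - 1 / ξ₂) 1) = 1 - 1 / ξ₂ := by
  have hξ : (0:ℝ) < ξ₂ := lt_of_lt_of_le one_pos h
  have hpos : (0:ℝ) < 1 / ξ₂ := by positivity
  have hle : 1 / ξ₂ ≤ 1 := by
    rw [div_le_one hξ]; exact h
  constructor
  · apply le_antisymm
    · have hmem : (-1 + 1/ξ₂) ∈ Set.Icc (-1 : ℝ) (-1 + 1/ξ₂) :=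
        Set.right_mem_Icc.2 (by linarith)
      calc Metric.infDist (0:ℝ) (Set.Icc (-1) (-1 + 1/ξ₂)) ≤ dist (0:ℝ) (-1 + 1/ξ₂) :=
            Metric.infDist_le_dist_of_mem hmem
        _ = 1 - 1/ξ₂ := by
            rw [Real.dist_eq]; rw [abs_of_nonneg (by linarith)]; ring
    · refine le_of_not_gt fun hlt => ?_
      obtain ⟨y, hy, hd⟩ := (Metric.infDist_lt_iff ⟨-1, Set.left_mem_Icc.2 (by linarith)⟩).1 hlt
      rw [Real.dist_eq, abs_of_nonneg (by linarith [hy.2])] at hd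
      linarith [hy.2]
  · apply le_antisymm
    · have hmem : (1 - 1/ξ₂) ∈ Set.Icc (1 - 1/ξ₂ : ℝ) 1 :=
        Set.left_mem_Icc.2 (by linarith)
      calc Metric.infDist (0:ℝ) (Set.Icc (1 - 1/ξ₂) 1) ≤ dist (0:ℝ) (1 - 1/ξ₂) :=
            Metric.infDist_le_dist_of_mem hmem
        _ = 1 - 1/ξ₂ := by
            rw [Real.dist_eq, abs_of_nonpos (by linarith)]; ring
    · refine le_of_not_gt fun hlt => ?_
      obtain ⟨y, hy, hd⟩ := (Metric.infDist_lt_iff ⟨1, Set.right_mem_Icc.2 (by linarith)⟩).1 hlt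
      rw [Real.dist_eq, abs_of_nonpos (by linarith [hy.1])] at hd
      linarith [hy.1]

/-! **Statement 17.** For `ξ₂ ∈ [1, ∞)` let `G₋(ξ₂) = [−1, −1 + 1/ξ₂]` and
`G₊(ξ₂) = [1 − 1/ξ₂, 1]`. The supremum of the distances from `0` to these sets equals `1`,
but it is not attained by any set of the family: each distance equals `1 − 1/ξ₂ < 1`.
(The set of worst-case scenarios of the point `0` is empty although its recovery radius is `1`.) -/

theorem stmt17 :
    sSup {t : ℝ | ∃ ξ₂ : ℝ, 1 ≤ ξ₂ ∧
        (t = Metric.infDist (0 : ℝ) (Set.Icc (-1) (-1 + 1 / ξ₂)) ∨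
          t = Metric.infDist (0 : ℝ) (Set.Icc (1 - 1 / ξ₂) 1))} = 1 ∧
      ∀ ξ₂ : ℝ, 1 ≤ ξ₂ →
        Metric.infDist (0 : ℝ) (Set.Icc (-1) (-1 + 1 / ξ₂)) = 1 - 1 / ξ₂ ∧
        Metric.infDist (0 : ℝ) (Set.Icc (1 - 1 / ξ₂) 1) = 1 - 1 / ξ₂ ∧
        1 - 1 / ξ₂ < 1 := by
  set S := {t : ℝ | ∃ ξ₂ : ℝ, 1 ≤ ξ₂ ∧
        (t = Metric.infDist (0 : ℝ) (Set.Icc (-1) (-1 + 1 / ξ₂)) ∨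
          t = Metric.infDist (0 : ℝ) (Set.Icc (1 - 1 / ξ₂) 1))} with hS
  have hmemS : ∀ t ∈ S, ∃ ξ₂ : ℝ, 1 ≤ ξ₂ ∧ t = 1 - 1/ξ₂ := by
    intro t ht
    obtain ⟨ξ₂, hξ, ht⟩ := ht
    obtain ⟨h1, h2⟩ := stmt17_aux ξ₂ hξ
    rcases ht with ht | ht
    · exact ⟨ξ₂, hξ, by rw [ht, h1]⟩
    · exact ⟨ξ₂, hξ, by rw [ht, h2]⟩
  have hne : S.Nonempty := ⟨Metric.infDist (0:ℝ) (Set.Icc (-1) (-1+1/1)), 1, le_refl 1, Or.inl rfl⟩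
  have hub : ∀ t ∈ S, t ≤ 1 := by
    intro t ht
    obtain ⟨ξ₂, hξ, rfl⟩ := hmemS t ht
    have : (0:ℝ) < 1/ξ₂ := by positivity
    linarith
  constructor
  · apply le_antisymm
    · exact csSup_le hne hub
    · rw [le_csSup_iff ⟨1, hub⟩ hne]
      intro b hb
      by_contra hlt
      push_neg at hlt
      have hb1 : 0 < 1 - b := by linarith
      obtain ⟨ξ, hξdef⟩ : ∃ ξ : ℝ, ξ = 1/(1-b) + 1 := ⟨_, rfl⟩
      have hinv : 0 < 1/(1-b) := by positivity
      have hξ1 : 1 ≤ ξ := by rw [hξdef]; linarith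
      have hmem : (1 - 1/ξ) ∈ S := by
        refine ⟨ξ, hξ1, Or.inr ?_⟩
        rw [(stmt17_aux ξ hξ1).2]
      have := hb hmem
      -- 1 - 1/ξ > b since ξ > 1/(1-b)
      have hξpos : 0 < ξ := lt_of_lt_of_le one_pos hξ1
      have h1 : 1/ξ < 1 - b := by
        rw [div_lt_iff₀ hξpos]
        have h2 : (1-b) * ξ = 1 + (1-b) := by
          rw [hξdef]; field_simp
        nlinarith
      linarith
  · intro ξ₂ hξ
    obtain ⟨h1, h2⟩ := stmt17_aux ξ₂ hξ
    have : (0:ℝ) < 1/ξ₂ := by positivity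
    exact ⟨h1, h2, by linarith⟩
end
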